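/- arXiv:0811.3975 — 2 statements merged into one kernel-verified Lean document; each statement's English description precedes it below -/
import Mathlib

section
/- Let δ be an initial distribution with support L and τ a strategy of player 2 such that γ₁(δ,σ,τ) = 0 for every strategy σ of player 1 (i.e., τ and δ are almost-surely winning for player 2). Then for every strategy σ, every n ≥ 1 and every play (k₁,c₁,d₁,…,kₙ₊₁) of length n+1 with positive probability under δ, σ, τ, the support B₂(L,d₁,…,dₙ) is almost-surely winning for player 2. -/
open scoped Classical

noncomputable section

/-- A probability distribution on a finite type, given by a nonnegative
real-valued density summing to `1`. -/
structure FDist (X : Type*) [Fintype X] where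
  f : X → ℝ
  nonneg : ∀ x, 0 ≤ f x
  sum_one : ∑ x, f x = 1

/-- The support of a distribution: the set of points with positive probability. -/
def FDist.support {X : Type*} [Fintype X] (δ : FDist X) : Finset X :=
  Finset.univ.filter fun x => 0 < δ.f x

/-- The uniform distribution on a nonempty finite set. -/
def uniform {X : Type*} [Fintype X] (L : Finset X) (hL : L.Nonempty) : FDist X where
  f x := if x ∈ L then (L.card : ℝ)⁻¹ else 0
  nonneg x := by split_ifs <;> positivity
  sum_one := by
    rw [Finset.sum_ite_mem, Finset.univ_inter, Finset.sum_const, nsmul_eq_mul,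
      mul_inv_cancel₀]
    exact_mod_cast (Finset.card_pos.mpr hL).ne'

/-- Uniform distribution on `L`, defaulting to the uniform distribution on the
whole type when `L` is empty. -/
def uniformD {X : Type*} [Fintype X] [Nonempty X] (L : Finset X) : FDist X :=
  if h : L.Nonempty then uniform L h else uniform Finset.univ Finset.univ_nonempty

/-- The Dirac distribution on a point. -/
def dirac {X : Type*} [Fintype X] (x : X) : FDist X where
  f y := if y = x then 1 else 0
  nonneg y := by by_cases h : y = x <;> simp [h]
  sum_one := by simp

/-- A stochastic game with partial observation on both sides and a reachability
objective for player 1: states `K`, actions `I`, `J`, signals `C`, `D`, target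
states `T`, transition probabilities `p`, and actions encoded in signals via
`act₁`, `act₂`. -/
structure Game (K I J C D : Type*) [Fintype K] [Fintype I] [Fintype J] [Fintype C] [Fintype D] where
  T : Finset K
  p : K → I → J → C × D × K → ℝ
  p_nonneg : ∀ k i j x, 0 ≤ p k i j x
  p_sum : ∀ k i j, ∑ x : C × D × K, p k i j x = 1
  act₁ : C → I
  act₂ : D → J
  act_compat : ∀ k i j c d l, 0 < p k i j (c, d, l) → i = act₁ c ∧ j = act₂ d

/-- A (behavioral) strategy of player 1: a distribution on actions for each
finite sequence of received signals. -/
abbrev Strategy1 (I C : Type*) [Fintype I] : Type _ := List C → FDist I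

/-- A (behavioral) strategy of player 2. -/
abbrev Strategy2 (J D : Type*) [Fintype J] : Type _ := List D → FDist J

/-- A play with `n+1` states: the initial state followed by `n` steps, each
consisting of a signal for player 1, a signal for player 2 and the next state. -/
structure Hist (K C D : Type*) (n : ℕ) where
  first : K
  steps : Fin n → C × D × K

instance (K C D : Type*) [Fintype K] [Fintype C] [Fintype D] (n : ℕ) :
    Fintype (Hist K C D n) :=
  Fintype.ofEquiv (K × (Fin n → C × D × K))
    { toFun := fun x => ⟨x.1, x.2⟩
      invFun := fun h => (h.first, h.steps)
      left_inv := fun _ => rfl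
      right_inv := fun _ => rfl }

namespace Hist

variable {K C D : Type*}

/-- The last state of a play. -/
def last : ∀ {n : ℕ}, Hist K C D n → K
  | 0, h => h.first
  | n + 1, h => (h.steps (Fin.last n)).2.2

/-- The play obtained by removing the last step. -/
def init {n : ℕ} (h : Hist K C D (n + 1)) : Hist K C D n :=
  ⟨h.first, fun m => h.steps m.castSucc⟩

/-- The `m`-th state of a play, `0`-indexed: `state h 0` is the initial state
(called `k₁` in `1`-indexed notation). -/
def state {n : ℕ} (h : Hist K C D n) (m : Fin (n + 1)) : K :=
  if hm : m.val = 0 then h.first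
  else (h.steps ⟨m.val - 1, by have := m.isLt; omega⟩).2.2

/-- The sequence of signals received by player 1 along the play. -/
def sig1 {n : ℕ} (h : Hist K C D n) : List C := List.ofFn fun m => (h.steps m).1

/-- The sequence of signals received by player 2 along the play. -/
def sig2 {n : ℕ} (h : Hist K C D n) : List D := List.ofFn fun m => (h.steps m).2.1

/-- The play visits the target set `T`. -/
def visits (T : Finset K) {n : ℕ} (h : Hist K C D n) : Prop :=
  ∃ m : Fin (n + 1), h.state m ∈ T

end Hist

namespace Game

variable {K I J C D : Type*} [Fintype K] [Fintype I] [Fintype J] [Fintype C] [Fintype D]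

/-- The probability of a given play of `n` steps, under initial distribution `δ`
and strategies `σ`, `τ`. -/
def playProb (G : Game K I J C D) (δ : FDist K) (σ : Strategy1 I C) (τ : Strategy2 J D) :
    ∀ n : ℕ, Hist K C D n → ℝ
  | 0, h => δ.f h.first
  | n + 1, h =>
      G.playProb δ σ τ n h.init *
        ∑ i : I, ∑ j : J,
          (σ h.init.sig1).f i * (τ h.init.sig2).f j *
            G.p h.init.last i j (h.steps (Fin.last n))

/-- The probability that a play with `n+1` states visits the target set. -/
def reachProb (G : Game K I J C D) (δ : FDist K) (σ : Strategy1 I C)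
    (τ : Strategy2 J D) (n : ℕ) : ℝ :=
  ∑ h : Hist K C D n, if h.visits G.T then G.playProb δ σ τ n h else 0

/-- The reachability probability `γ₁(δ,σ,τ)`: the supremum over horizons of the
probability that the play visits the target set. -/
def val (G : Game K I J C D) (δ : FDist K) (σ : Strategy1 I C) (τ : Strategy2 J D) : ℝ :=
  ⨆ n : ℕ, G.reachProb δ σ τ n

/-- `δ` is almost-surely winning for player 1. -/
def AlmostSureWin1 (G : Game K I J C D) (δ : FDist K) : Prop :=
  ∃ σ, ∀ τ, G.val δ σ τ = 1

/-- `δ` is positively winning for player 1. -/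
def PositiveWin1 (G : Game K I J C D) (δ : FDist K) : Prop :=
  ∃ σ, ∀ τ, 0 < G.val δ σ τ

/-- `δ` is positively winning for player 2. -/
def PositiveWin2 (G : Game K I J C D) (δ : FDist K) : Prop :=
  ∃ τ, ∀ σ, G.val δ σ τ < 1

/-- `δ` is surely (equivalently here, almost-surely) winning for player 2. -/
def SureWin2 (G : Game K I J C D) (δ : FDist K) : Prop :=
  ∃ τ, ∀ σ, G.val δ σ τ = 0

/-- One-step belief operator of player 1. -/
def B1 (G : Game K I J C D) (L : Finset K) (c : C) : Finset K :=
  Finset.univ.filter fun k => ∃ l ∈ L, ∃ d : D, 0 < G.p l (G.act₁ c) (G.act₂ d) (c, d, k)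

/-- One-step belief operator of player 2. -/
def B2 (G : Game K I J C D) (L : Finset K) (d : D) : Finset K :=
  Finset.univ.filter fun k => ∃ l ∈ L, ∃ c : C, 0 < G.p l (G.act₁ c) (G.act₂ d) (c, d, k)

/-- Belief of player 1 after a sequence of signals. -/
def B1seq (G : Game K I J C D) (L : Finset K) (cs : List C) : Finset K := cs.foldl G.B1 L

/-- Belief of player 2 after a sequence of signals. -/
def B2seq (G : Game K I J C D) (L : Finset K) (ds : List D) : Finset K := ds.foldl G.B2 L

/-- One-step pessimistic belief operator of player 1. -/
def B1p (G : Game K I J C D) (L : Finset K) (c : C) : Finset K := G.B1 (L \ G.T) c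

/-- One-step pessimistic belief operator of player 2. -/
def B2p (G : Game K I J C D) (L : Finset K) (d : D) : Finset K := G.B2 (L \ G.T) d

/-- Pessimistic belief of player 1 after a sequence of signals. -/
def B1pseq (G : Game K I J C D) (L : Finset K) (cs : List C) : Finset K := cs.foldl G.B1p L

/-- Pessimistic belief of player 2 after a sequence of signals. -/
def B2pseq (G : Game K I J C D) (L : Finset K) (ds : List D) : Finset K := ds.foldl G.B2p L

/-- The operator `Φ` on collections of subsets of `K ∖ T`. -/
def Phi (G : Game K I J C D) (𝓛 : Set (Finset K)) : Set (Finset K) :=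
  {L | L ∈ 𝓛 ∧ L ∩ G.T = ∅ ∧ ∃ j : J, ∀ d : D, G.act₂ d = j → G.B2 L d ∈ 𝓛}

theorem Phi_mono (G : Game K I J C D) : Monotone G.Phi := by
  intro A B hAB L hL
  obtain ⟨h1, h2, j, hj⟩ := hL
  exact ⟨hAB h1, h2, j, fun d hd => hAB (hj d hd)⟩

/-- `𝓛_∞`, the greatest fixpoint of `Φ`. -/
def Linf (G : Game K I J C D) : Set (Finset K) :=
  OrderHom.gfp ⟨G.Phi, G.Phi_mono⟩

/-- The winning condition of the `𝓛`-game for player 1, on a play with initial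
support `L`: some state `k_m` is a target state and all earlier pessimistic
beliefs of player 1 avoid `𝓛`. -/
def LWin (G : Game K I J C D) (𝓛 : Set (Finset K)) (L : Finset K) {n : ℕ}
    (h : Hist K C D n) : Prop :=
  ∃ m : Fin (n + 1), h.state m ∈ G.T ∧
    ∀ r : ℕ, 1 ≤ r → r ≤ m.val → G.B1pseq L (h.sig1.take r) ∉ 𝓛

/-- The payoff `γ₁^𝓛(δ,σ,τ)` of player 1 in the `𝓛`-game, for an initial
distribution `δ` with support `L`. -/
def Lval (G : Game K I J C D) (𝓛 : Set (Finset K)) (L : Finset K) (δ : FDist K)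
    (σ : Strategy1 I C) (τ : Strategy2 J D) : ℝ :=
  ⨆ n : ℕ, ∑ h : Hist K C D n, if G.LWin 𝓛 L h then G.playProb δ σ τ n h else 0

end Game

/-- The uniformly random strategy `σ_R` of player 1. -/
def randomStrat (I C : Type*) [Fintype I] [Nonempty I] : Strategy1 I C :=
  fun _ => uniform Finset.univ Finset.univ_nonempty
variable {K I J C D : Type*} [Fintype K] [Fintype I] [Fintype J] [Fintype C] [Fintype D]
  [Nonempty K] [Nonempty I] [Nonempty J] [Nonempty C] [Nonempty D]


section Aux

lemma pos_pos_of_mul {a b : ℝ} (ha : 0 ≤ a) (hb : 0 ≤ b) (h : 0 < a * b) :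
    0 < a ∧ 0 < b := by
  refine ⟨ha.lt_of_ne ?_, hb.lt_of_ne ?_⟩ <;> rintro rfl <;> simp at h

lemma exists_pos_of_sum_pos {α : Type*} {s : Finset α} {f : α → ℝ}
    (h : 0 < ∑ x ∈ s, f x) : ∃ x ∈ s, 0 < f x := by
  by_contra hc
  push_neg at hc
  exact absurd (Finset.sum_nonpos hc) (not_le.2 h)

namespace Hist

variable {K' C' D' : Type*}

lemma length_sig1 {n : ℕ} (h : Hist K' C' D' n) : h.sig1.length = n := by
  simp [Hist.sig1]

lemma length_sig2 {n : ℕ} (h : Hist K' C' D' n) : h.sig2.length = n := by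
  simp [Hist.sig2]

/-- Append one step at the end of a play. -/
def snoc' {n : ℕ} (h : Hist K' C' D' n) (x : C' × D' × K') : Hist K' C' D' (n + 1) :=
  ⟨h.first, fun m => if hm : m.val < n then h.steps ⟨m.val, hm⟩ else x⟩

lemma snoc'_init {n : ℕ} (h : Hist K' C' D' n) (x : C' × D' × K') :
    (h.snoc' x).init = h := by
  show Hist.mk _ _ = h
  conv_rhs => rw [show h = ⟨h.first, h.steps⟩ from rfl]
  congr 1
  funext m
  show (h.snoc' x).steps m.castSucc = h.steps m
  simp only [snoc', Fin.coe_castSucc]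
  rw [dif_pos m.isLt]

lemma snoc'_steps_last {n : ℕ} (h : Hist K' C' D' n) (x : C' × D' × K') :
    (h.snoc' x).steps (Fin.last n) = x := by
  show (if hm : (Fin.last n).val < n then h.steps ⟨(Fin.last n).val, hm⟩ else x) = x
  rw [dif_neg (by simp)]

lemma snoc'_last {n : ℕ} (h : Hist K' C' D' n) (x : C' × D' × K') :
    (h.snoc' x).last = x.2.2 := by
  show ((h.snoc' x).steps (Fin.last n)).2.2 = x.2.2
  rw [snoc'_steps_last]

lemma sig1_snoc' {n : ℕ} (h : Hist K' C' D' n) (x : C' × D' × K') :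
    (h.snoc' x).sig1 = h.sig1 ++ [x.1] := by
  simp only [Hist.sig1, List.ofFn_succ', List.concat_eq_append, snoc'_steps_last]
  congr 1
  apply congrArg List.ofFn
  funext m
  show ((h.snoc' x).steps m.castSucc).1 = _
  simp only [snoc', Fin.coe_castSucc]
  rw [dif_pos m.isLt]

lemma sig2_snoc' {n : ℕ} (h : Hist K' C' D' n) (x : C' × D' × K') :
    (h.snoc' x).sig2 = h.sig2 ++ [x.2.1] := by
  simp only [Hist.sig2, List.ofFn_succ', List.concat_eq_append, snoc'_steps_last]
  congr 1
  apply congrArg List.ofFn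
  funext m
  show ((h.snoc' x).steps m.castSucc).2.1 = _
  simp only [snoc', Fin.coe_castSucc]
  rw [dif_pos m.isLt]

lemma snoc'_init_self {n : ℕ} (h : Hist K' C' D' (n + 1)) :
    h.init.snoc' (h.steps (Fin.last n)) = h := by
  show Hist.mk _ _ = h
  conv_rhs => rw [show h = ⟨h.first, h.steps⟩ from rfl]
  congr 1
  funext m
  show (if hm : m.val < n then h.init.steps ⟨m.val, hm⟩ else h.steps (Fin.last n)) = h.steps m
  by_cases hm : m.val < n
  · rw [dif_pos hm]
    show h.steps (Fin.castSucc ⟨m.val, hm⟩) = h.steps m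
    rw [show Fin.castSucc ⟨m.val, hm⟩ = m from Fin.ext rfl]
  · rw [dif_neg hm]
    rw [show Fin.last n = m from Fin.ext (by have := m.isLt; simp only [Fin.val_last]; omega)]

lemma sig1_succ {n : ℕ} (h : Hist K' C' D' (n + 1)) :
    h.sig1 = h.init.sig1 ++ [(h.steps (Fin.last n)).1] := by
  conv_lhs => rw [← snoc'_init_self h]
  rw [sig1_snoc']

lemma sig2_succ {n : ℕ} (h : Hist K' C' D' (n + 1)) :
    h.sig2 = h.init.sig2 ++ [(h.steps (Fin.last n)).2.1] := by
  conv_lhs => rw [← snoc'_init_self h]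
  rw [sig2_snoc']

/-- The canonical equivalence splitting off the last step. -/
def histEquiv (K' C' D' : Type*) (n : ℕ) :
    Hist K' C' D' (n + 1) ≃ Hist K' C' D' n × (C' × D' × K') where
  toFun h := (h.init, h.steps (Fin.last n))
  invFun p := p.1.snoc' p.2
  left_inv h := snoc'_init_self h
  right_inv p := by
    refine Prod.ext ?_ ?_
    · exact snoc'_init p.1 p.2
    · exact snoc'_steps_last p.1 p.2

/-- The equivalence between states and length-0 plays. -/
def histZeroEquiv (K' C' D' : Type*) : K' ≃ Hist K' C' D' 0 where
  toFun k := ⟨k, fun m => m.elim0⟩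
  invFun h := h.first
  left_inv k := rfl
  right_inv h := by
    show Hist.mk h.first (fun m => m.elim0) = h
    have e : (fun m => m.elim0 : Fin 0 → C' × D' × K') = h.steps := funext fun m => m.elim0
    rw [e]

/-- Concatenation of plays. -/
def append {n n' : ℕ} (h₀ : Hist K' C' D' n) (h₁ : Hist K' C' D' n') :
    Hist K' C' D' (n + n') :=
  ⟨h₀.first, fun m =>
    if hm : m.val < n then h₀.steps ⟨m.val, hm⟩
    else h₁.steps ⟨m.val - n, by have := m.isLt; omega⟩⟩

lemma append_zero {n : ℕ} (h₀ : Hist K' C' D' n) (h₁ : Hist K' C' D' 0) :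
    append h₀ h₁ = h₀ := by
  show Hist.mk _ _ = h₀
  conv_rhs => rw [show h₀ = ⟨h₀.first, h₀.steps⟩ from rfl]
  congr 1
  funext m
  rw [dif_pos (show m.val < n from m.isLt)]
  exact congrArg h₀.steps (Fin.eta m m.isLt)

lemma append_init {n n' : ℕ} (h₀ : Hist K' C' D' n) (h₁ : Hist K' C' D' (n' + 1)) :
    (append h₀ h₁).init = append h₀ h₁.init := rfl

lemma append_steps_last {n n' : ℕ} (h₀ : Hist K' C' D' n) (h₁ : Hist K' C' D' (n' + 1)) :
    (append h₀ h₁).steps (Fin.last (n + n')) = h₁.steps (Fin.last n') := by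
  show (if hm : (Fin.last (n + n')).val < n then _ else _) = _
  rw [dif_neg (by simp only [Fin.val_last]; omega)]
  congr 1
  apply Fin.ext
  simp only [Fin.val_last]
  omega

lemma append_sig1 {n n' : ℕ} (h₀ : Hist K' C' D' n) (h₁ : Hist K' C' D' n') :
    (append h₀ h₁).sig1 = h₀.sig1 ++ h₁.sig1 := by
  simp only [Hist.sig1]
  rw [List.ofFn_add]
  congr 1
  · apply congrArg List.ofFn
    funext i
    simp only [append, Fin.coe_castAdd, Fin.val_castLE]
    rw [dif_pos i.isLt]
  · apply congrArg List.ofFn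
    funext j
    simp only [append, Fin.coe_natAdd]
    rw [dif_neg (by omega)]
    exact congrArg (fun a => (h₁.steps a).1) (Fin.ext (by show n + j.val - n = j.val; omega))

lemma append_sig2 {n n' : ℕ} (h₀ : Hist K' C' D' n) (h₁ : Hist K' C' D' n') :
    (append h₀ h₁).sig2 = h₀.sig2 ++ h₁.sig2 := by
  simp only [Hist.sig2]
  rw [List.ofFn_add]
  congr 1
  · apply congrArg List.ofFn
    funext i
    simp only [append, Fin.coe_castAdd, Fin.val_castLE]
    rw [dif_pos i.isLt]
  · apply congrArg List.ofFn
    funext j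
    simp only [append, Fin.coe_natAdd]
    rw [dif_neg (by omega)]
    exact congrArg (fun a => (h₁.steps a).2.1) (Fin.ext (by show n + j.val - n = j.val; omega))

lemma append_last {n n' : ℕ} (h₀ : Hist K' C' D' n) (h₁ : Hist K' C' D' n')
    (hf : h₁.first = h₀.last) : (append h₀ h₁).last = h₁.last := by
  cases n' with
  | zero => rw [append_zero]; exact hf.symm
  | succ m =>
      show ((append h₀ h₁).steps (Fin.last (n + m))).2.2 = _
      rw [append_steps_last]
      rfl

lemma append_steps_lt {n n' : ℕ} (h₀ : Hist K' C' D' n) (h₁ : Hist K' C' D' n')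
    (m : Fin (n + n')) (hm : m.val < n) :
    (append h₀ h₁).steps m = h₀.steps ⟨m.val, hm⟩ := dif_pos hm

lemma append_steps_ge {n n' : ℕ} (h₀ : Hist K' C' D' n) (h₁ : Hist K' C' D' n')
    (m : Fin (n + n')) (hm : ¬ m.val < n) :
    (append h₀ h₁).steps m = h₁.steps ⟨m.val - n, by have := m.isLt; omega⟩ := dif_neg hm

lemma state_eq_first {n : ℕ} (h : Hist K' C' D' n) (m : Fin (n + 1)) (hm : m.val = 0) :
    h.state m = h.first := dif_pos hm

lemma state_eq_steps {n : ℕ} (h : Hist K' C' D' n) (m : Fin (n + 1)) (hm : ¬ m.val = 0) :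
    h.state m = (h.steps ⟨m.val - 1, by have := m.isLt; omega⟩).2.2 := dif_neg hm

lemma steps_congr {n : ℕ} (h : Hist K' C' D' n) (a b : Fin n) (hab : a.val = b.val) :
    (h.steps a).2.2 = (h.steps b).2.2 := by rw [Fin.ext hab]

lemma append_state {n n' : ℕ} (h₀ : Hist K' C' D' n) (h₁ : Hist K' C' D' n')
    (hf : h₁.first = h₀.last) (m : Fin (n' + 1)) :
    (append h₀ h₁).state ⟨n + m.val, by have := m.isLt; omega⟩ = h₁.state m := by
  by_cases h0 : m.val = 0
  · rw [state_eq_first h₁ m h0]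
    rcases Nat.eq_zero_or_pos n with hn | hn
    · subst hn
      rw [state_eq_first _ _ (by show 0 + m.val = 0; omega)]
      exact hf.symm
    · rw [state_eq_steps _ _ (by show ¬ n + m.val = 0; omega),
        append_steps_lt h₀ h₁ _ (by show n + m.val - 1 < n; omega)]
      rw [hf]
      obtain ⟨t, rfl⟩ := Nat.exists_eq_succ_of_ne_zero hn.ne'
      exact steps_congr h₀ _ (Fin.last t)
        (by show t + 1 + m.val - 1 = (Fin.last t).val; simp only [Fin.val_last]; omega)
  · rw [state_eq_steps h₁ m h0, state_eq_steps _ _ (by show ¬ n + m.val = 0; omega),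
      append_steps_ge h₀ h₁ _ (by show ¬ n + m.val - 1 < n; omega)]
    exact steps_congr h₁ _ _ (by show n + m.val - 1 - n = m.val - 1; omega)

lemma append_visits {T : Finset K'} {n n' : ℕ} (h₀ : Hist K' C' D' n)
    (h₁ : Hist K' C' D' n') (hf : h₁.first = h₀.last) (hv : h₁.visits T) :
    (append h₀ h₁).visits T := by
  obtain ⟨m, hm⟩ := hv
  exact ⟨⟨n + m.val, by have := m.isLt; omega⟩, by rw [append_state h₀ h₁ hf m]; exact hm⟩

end Hist

namespace Game

lemma playProb_succ (G : Game K I J C D) (δ : FDist K) (σ : Strategy1 I C)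
    (τ : Strategy2 J D) {n : ℕ} (h : Hist K C D (n + 1)) :
    G.playProb δ σ τ (n + 1) h =
      G.playProb δ σ τ n h.init *
        ∑ i : I, ∑ j : J,
          (σ h.init.sig1).f i * (τ h.init.sig2).f j *
            G.p h.init.last i j (h.steps (Fin.last n)) := rfl

lemma playProb_nonneg (G : Game K I J C D) (δ : FDist K) (σ : Strategy1 I C)
    (τ : Strategy2 J D) : ∀ (n : ℕ) (h : Hist K C D n), 0 ≤ G.playProb δ σ τ n h
  | 0, h => δ.nonneg _
  | n + 1, h =>
      mul_nonneg (playProb_nonneg G δ σ τ n h.init)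
        (Finset.sum_nonneg fun i _ => Finset.sum_nonneg fun j _ =>
          mul_nonneg (mul_nonneg ((σ _).nonneg _) ((τ _).nonneg _)) (G.p_nonneg _ _ _ _))

lemma sum_hist_succ {n : ℕ} (F : Hist K C D (n + 1) → ℝ) :
    ∑ h : Hist K C D (n + 1), F h = ∑ h : Hist K C D n, ∑ x : C × D × K, F (h.snoc' x) := by
  calc ∑ h : Hist K C D (n + 1), F h
      = ∑ p : Hist K C D n × (C × D × K), F (p.1.snoc' p.2) :=
        Fintype.sum_equiv (Hist.histEquiv K C D n) F (fun p => F (p.1.snoc' p.2))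
          (fun h => (congrArg F (Hist.snoc'_init_self h)).symm)
    _ = ∑ h : Hist K C D n, ∑ x : C × D × K, F (h.snoc' x) :=
        Fintype.sum_prod_type (fun p : Hist K C D n × (C × D × K) => F (p.1.snoc' p.2))

lemma sum_playProb (G : Game K I J C D) (δ : FDist K) (σ : Strategy1 I C)
    (τ : Strategy2 J D) : ∀ n : ℕ, ∑ h : Hist K C D n, G.playProb δ σ τ n h = 1
  | 0 => by
      rw [← Fintype.sum_equiv (Hist.histZeroEquiv K C D) (fun k => δ.f k)
        (fun h => G.playProb δ σ τ 0 h) (fun k => rfl)]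
      exact δ.sum_one
  | n + 1 => by
      rw [sum_hist_succ]
      have key : ∀ (k : K) (A : I → ℝ) (B : J → ℝ), (∑ i, A i = 1) → (∑ j, B j = 1) →
          ∑ x : C × D × K, ∑ i, ∑ j, A i * B j * G.p k i j x = 1 := by
        intro k A B hA hB
        rw [Finset.sum_comm]
        have h1 : ∀ i, ∑ x : C × D × K, ∑ j, A i * B j * G.p k i j x = A i := by
          intro i
          rw [Finset.sum_comm]
          have h2 : ∀ j, ∑ x : C × D × K, A i * B j * G.p k i j x = A i * B j := by
            intro j
            rw [← Finset.mul_sum, G.p_sum, mul_one]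
          simp only [h2]
          rw [← Finset.mul_sum, hB, mul_one]
        simp only [h1]
        exact hA
      have hstep : ∀ (h : Hist K C D n) (x : C × D × K),
          G.playProb δ σ τ (n + 1) (h.snoc' x) =
            G.playProb δ σ τ n h *
              ∑ i : I, ∑ j : J, (σ h.sig1).f i * (τ h.sig2).f j * G.p h.last i j x := by
        intro h x
        rw [playProb_succ, Hist.snoc'_init, Hist.snoc'_steps_last]
      calc ∑ h : Hist K C D n, ∑ x : C × D × K, G.playProb δ σ τ (n + 1) (h.snoc' x)
          = ∑ h : Hist K C D n, G.playProb δ σ τ n h := by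
            refine Finset.sum_congr rfl fun h _ => ?_
            simp only [hstep]
            rw [← Finset.mul_sum, key h.last (fun i => (σ h.sig1).f i)
              (fun j => (τ h.sig2).f j) (σ h.sig1).sum_one (τ h.sig2).sum_one, mul_one]
        _ = 1 := sum_playProb G δ σ τ n

lemma playProb_factor (G : Game K I J C D) (δ : FDist K) (σ : Strategy1 I C)
    (τ : Strategy2 J D) : ∀ (n : ℕ) (h : Hist K C D n),
      G.playProb δ σ τ n h = δ.f h.first * G.playProb (dirac h.first) σ τ n h
  | 0, h => by simp [Game.playProb, dirac]
  | n + 1, h => by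
      rw [playProb_succ, playProb_succ, playProb_factor G δ σ τ n h.init]
      have hfe : h.init.first = h.first := rfl
      rw [hfe]
      ring

lemma playProb_congr (G : Game K I J C D) (δ : FDist K) :
    ∀ (n : ℕ) (h : Hist K C D n) (σ₁ σ₂ : Strategy1 I C) (τ₁ τ₂ : Strategy2 J D),
      (∀ l : List C, l.length < n → σ₁ l = σ₂ l) →
      (∀ l : List D, l.length < n → τ₁ l = τ₂ l) →
      G.playProb δ σ₁ τ₁ n h = G.playProb δ σ₂ τ₂ n h
  | 0, h, _, _, _, _, _, _ => rfl
  | n + 1, h, σ₁, σ₂, τ₁, τ₂, hσ, hτ => by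
      rw [playProb_succ, playProb_succ,
        playProb_congr G δ n h.init σ₁ σ₂ τ₁ τ₂
          (fun l hl => hσ l (hl.trans (Nat.lt_succ_self n)))
          (fun l hl => hτ l (hl.trans (Nat.lt_succ_self n))),
        hσ h.init.sig1 (by rw [Hist.length_sig1]; omega),
        hτ h.init.sig2 (by rw [Hist.length_sig2]; omega)]

lemma playProb_succ_pos (G : Game K I J C D) (δ : FDist K) (σ : Strategy1 I C)
    (τ : Strategy2 J D) {n : ℕ} (h : Hist K C D (n + 1))
    (hp : 0 < G.playProb δ σ τ (n + 1) h) :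
    0 < G.playProb δ σ τ n h.init ∧
      0 < ∑ i : I, ∑ j : J, (σ h.init.sig1).f i * (τ h.init.sig2).f j *
        G.p h.init.last i j (h.steps (Fin.last n)) := by
  refine pos_pos_of_mul (playProb_nonneg G δ σ τ n h.init) ?_ (by rw [← playProb_succ]; exact hp)
  exact Finset.sum_nonneg fun i _ => Finset.sum_nonneg fun j _ =>
    mul_nonneg (mul_nonneg ((σ _).nonneg _) ((τ _).nonneg _)) (G.p_nonneg _ _ _ _)

lemma step_pos_data (G : Game K I J C D) {k : K} {a : FDist I} {b : FDist J}
    {x : C × D × K}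
    (h : 0 < ∑ i : I, ∑ j : J, a.f i * b.f j * G.p k i j x) :
    0 < a.f (G.act₁ x.1) ∧ 0 < b.f (G.act₂ x.2.1) ∧
      0 < G.p k (G.act₁ x.1) (G.act₂ x.2.1) x := by
  obtain ⟨i, -, hi⟩ := exists_pos_of_sum_pos h
  obtain ⟨j, -, hj⟩ := exists_pos_of_sum_pos hi
  obtain ⟨hab, hp⟩ := pos_pos_of_mul
    (mul_nonneg (a.nonneg _) (b.nonneg _)) (G.p_nonneg _ _ _ _) hj
  obtain ⟨ha, hb⟩ := pos_pos_of_mul (a.nonneg _) (b.nonneg _) hab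
  obtain ⟨hic, hjd⟩ := G.act_compat k i j x.1 x.2.1 x.2.2 hp
  rw [← hic, ← hjd]
  exact ⟨ha, hb, hp⟩

lemma B2seq_append_singleton (G : Game K I J C D) (L : Finset K) (ds : List D) (d : D) :
    G.B2seq L (ds ++ [d]) = G.B2 (G.B2seq L ds) d := by
  simp [Game.B2seq, List.foldl_append]

lemma last_mem_belief (G : Game K I J C D) (δ : FDist K) {L : Finset K}
    (hδ : δ.support = L) (σ : Strategy1 I C) (τ : Strategy2 J D) :
    ∀ (n : ℕ) (h : Hist K C D n), 0 < G.playProb δ σ τ n h →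
      h.last ∈ G.B2seq L h.sig2
  | 0, h, hp => by
      have hmem : h.first ∈ δ.support := Finset.mem_filter.2 ⟨Finset.mem_univ _, hp⟩
      rw [hδ] at hmem
      simpa [Hist.last, Hist.sig2, Game.B2seq] using hmem
  | n + 1, h, hp => by
      obtain ⟨h1, h2⟩ := playProb_succ_pos G δ σ τ h hp
      obtain ⟨-, -, hpp⟩ := step_pos_data G h2
      have hmem := last_mem_belief G δ hδ σ τ n h.init h1
      rw [Hist.sig2_succ h, B2seq_append_singleton]
      refine Finset.mem_filter.2 ⟨Finset.mem_univ _, h.init.last, hmem,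
        (h.steps (Fin.last n)).1, ?_⟩
      exact hpp

lemma exists_random_hist (G : Game K I J C D) (δ : FDist K) {L : Finset K}
    (hδ : δ.support = L) (τ : Strategy2 J D) :
    ∀ (n : ℕ) (h : Hist K C D n) (σ : Strategy1 I C), 0 < G.playProb δ σ τ n h →
      ∀ k ∈ G.B2seq L h.sig2, ∃ h₀ : Hist K C D n,
        h₀.sig2 = h.sig2 ∧ h₀.last = k ∧ 0 < G.playProb δ (randomStrat I C) τ n h₀
  | 0, h, σ, hp, k, hk => by
      refine ⟨⟨k, fun m => m.elim0⟩, by simp [Hist.sig2], rfl, ?_⟩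
      show 0 < δ.f k
      have hkL : k ∈ L := by simpa [Hist.sig2, Game.B2seq] using hk
      rw [← hδ] at hkL
      exact (Finset.mem_filter.1 hkL).2
  | n + 1, h, σ, hp, k, hk => by
      obtain ⟨h1, h2⟩ := playProb_succ_pos G δ σ τ h hp
      obtain ⟨-, hj, -⟩ := step_pos_data G h2
      rw [Hist.sig2_succ h, B2seq_append_singleton] at hk
      obtain ⟨-, l, hl, c, hpc⟩ := Finset.mem_filter.1 hk
      obtain ⟨h₀, hs2, hlast, hp₀⟩ := exists_random_hist G δ hδ τ n h.init σ h1 l hl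
      set d := (h.steps (Fin.last n)).2.1 with hd
      refine ⟨h₀.snoc' (c, d, k), ?_, ?_, ?_⟩
      · rw [Hist.sig2_snoc', hs2, ← Hist.sig2_succ h]
      · rw [Hist.snoc'_last]
      · rw [playProb_succ, Hist.snoc'_init, Hist.snoc'_steps_last]
        refine mul_pos hp₀ ?_
        have hterm : 0 < (randomStrat I C h₀.sig1).f (G.act₁ c) * (τ h₀.sig2).f (G.act₂ d) *
            G.p h₀.last (G.act₁ c) (G.act₂ d) (c, d, k) := by
          refine mul_pos (mul_pos ?_ ?_) ?_
          · simp only [randomStrat, uniform, Finset.mem_univ, if_true]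
            rw [inv_pos]
            exact_mod_cast Fintype.card_pos
          · rw [hs2]; exact hj
          · rw [hlast]; exact hpc
        have hnn : ∀ i : I, ∀ j : J,
            0 ≤ (randomStrat I C h₀.sig1).f i * (τ h₀.sig2).f j *
              G.p h₀.last i j (c, d, k) := fun i j =>
          mul_nonneg (mul_nonneg ((randomStrat I C h₀.sig1).nonneg _)
            ((τ h₀.sig2).nonneg _)) (G.p_nonneg _ _ _ _)
        calc (0 : ℝ) < (randomStrat I C h₀.sig1).f (G.act₁ c) * (τ h₀.sig2).f (G.act₂ d) *
            G.p h₀.last (G.act₁ c) (G.act₂ d) (c, d, k) := hterm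
          _ ≤ ∑ j : J, (randomStrat I C h₀.sig1).f (G.act₁ c) * (τ h₀.sig2).f j *
              G.p h₀.last (G.act₁ c) j (c, d, k) :=
            Finset.single_le_sum (fun j _ => hnn _ j) (Finset.mem_univ _)
          _ ≤ ∑ i : I, ∑ j : J, (randomStrat I C h₀.sig1).f i * (τ h₀.sig2).f j *
              G.p h₀.last i j (c, d, k) :=
            Finset.single_le_sum
              (fun i _ => Finset.sum_nonneg fun j _ => hnn i j) (Finset.mem_univ _)

lemma append_playProb (G : Game K I J C D) (δ : FDist K) (σ : Strategy1 I C)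
    (τ : Strategy2 J D) :
    ∀ (n' : ℕ) (h' : Hist K C D n') {n : ℕ} (h₀ : Hist K C D n),
      h'.first = h₀.last →
      G.playProb δ σ τ (n + n') (h₀.append h') =
        G.playProb δ σ τ n h₀ *
          G.playProb (dirac h'.first) (fun l => σ (h₀.sig1 ++ l))
            (fun l => τ (h₀.sig2 ++ l)) n' h'
  | 0, h', n, h₀, hf => by
      rw [Hist.append_zero]
      show G.playProb δ σ τ n h₀ = _ * _
      simp [Game.playProb, dirac]
  | n' + 1, h', n, h₀, hf => by
      show G.playProb δ σ τ ((n + n') + 1) (h₀.append h') = _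
      rw [playProb_succ, Hist.append_init, Hist.append_sig1, Hist.append_sig2,
        Hist.append_last h₀ h'.init (show h'.init.first = h₀.last from hf),
        Hist.append_steps_last,
        append_playProb G δ σ τ n' h'.init h₀ (show h'.init.first = h₀.last from hf),
        playProb_succ G (dirac h'.first)]
      have : (dirac (h'.init.first)) = dirac h'.first := rfl
      rw [this]
      ring

lemma reachProb_le_one (G : Game K I J C D) (δ : FDist K) (σ : Strategy1 I C)
    (τ : Strategy2 J D) (n : ℕ) : G.reachProb δ σ τ n ≤ 1 := by
  rw [← sum_playProb G δ σ τ n]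
  refine Finset.sum_le_sum fun h _ => ?_
  split_ifs
  · exact le_refl _
  · exact playProb_nonneg G δ σ τ n h

lemma reachProb_le_val (G : Game K I J C D) (δ : FDist K) (σ : Strategy1 I C)
    (τ : Strategy2 J D) (n : ℕ) : G.reachProb δ σ τ n ≤ G.val δ σ τ := by
  refine le_ciSup ⟨1, ?_⟩ n
  rintro y ⟨m, rfl⟩
  exact reachProb_le_one G δ σ τ m

end Game

end Aux

/-- if `τ` is almost-surely winning for player 2 from `δ`, then along
any play of positive probability the belief of player 2 remains an almost-surely
winning support for player 2. -/
theorem belief2_stays_winning (G : Game K I J C D) (δ : FDist K) (L : Finset K)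
    (hδ : δ.support = L) (τ : Strategy2 J D) (hτ : ∀ σ, G.val δ σ τ = 0) :
    ∀ (σ : Strategy1 I C) (n : ℕ), 1 ≤ n → ∀ h : Hist K C D n,
      0 < G.playProb δ σ τ n h →
      G.SureWin2 (uniformD (G.B2seq L h.sig2)) := by
  intro σ n _hn h hp
  set L' := G.B2seq L h.sig2 with hL'
  have hne : L'.Nonempty := ⟨h.last, Game.last_mem_belief G δ hδ σ τ n h hp⟩
  refine ⟨fun l => τ (h.sig2 ++ l), fun σ' => ?_⟩
  have hreach : ∀ n' : ℕ,
      G.reachProb (uniformD L') σ' (fun l => τ (h.sig2 ++ l)) n' = 0 := by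
    intro n'
    apply Finset.sum_eq_zero
    intro h' _
    split_ifs with hv
    · by_contra hne0
      have hp' : 0 < G.playProb (uniformD L') σ' (fun l => τ (h.sig2 ++ l)) n' h' :=
        lt_of_le_of_ne (Game.playProb_nonneg G _ _ _ n' h') (Ne.symm hne0)
      rw [Game.playProb_factor G (uniformD L') σ' _ n' h'] at hp'
      obtain ⟨hfpos, hdpos⟩ := pos_pos_of_mul ((uniformD L').nonneg _)
        (Game.playProb_nonneg G _ _ _ n' h') hp'
      have hfirst : h'.first ∈ L' := by
        by_contra hmem
        rw [uniformD, dif_pos hne] at hfpos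
        simp only [uniform, hmem, if_false] at hfpos
        exact lt_irrefl 0 hfpos
      obtain ⟨h₀, hs2, hlast, hp₀⟩ :=
        Game.exists_random_hist G δ hδ τ n h σ hp h'.first hfirst
      set σstar : Strategy1 I C :=
        fun cs => if n ≤ cs.length then σ' (cs.drop n) else randomStrat I C cs with hσstar
      have hp₀' : 0 < G.playProb δ σstar τ n h₀ := by
        rw [Game.playProb_congr G δ n h₀ σstar (randomStrat I C) τ τ
          (fun l hl => by simp only [hσstar]; rw [if_neg (by omega)])
          (fun _ _ => rfl)]
        exact hp₀
      have hff : h'.first = h₀.last := hlast.symm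
      have happ := Game.append_playProb G δ σstar τ n' h' h₀ hff
      have eσ : (fun l => σstar (h₀.sig1 ++ l)) = σ' := by
        funext l
        have hlen : n ≤ (h₀.sig1 ++ l).length := by
          rw [List.length_append, Hist.length_sig1]; omega
        simp only [hσstar]
        rw [if_pos hlen]
        have hdrop := List.drop_left (l₁ := h₀.sig1) (l₂ := l)
        rw [Hist.length_sig1] at hdrop
        rw [hdrop]
      have eτ : (fun l => τ (h₀.sig2 ++ l)) = fun l => τ (h.sig2 ++ l) := by
        rw [hs2]
      rw [eσ, eτ] at happ
      have hpos_app : 0 < G.playProb δ σstar τ (n + n') (h₀.append h') := by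
        rw [happ]; exact mul_pos hp₀' hdpos
      have hvis : (h₀.append h').visits G.T := Hist.append_visits h₀ h' hff hv
      have hterm_le : G.playProb δ σstar τ (n + n') (h₀.append h') ≤
          G.reachProb δ σstar τ (n + n') := by
        have hsl := Finset.single_le_sum
          (f := fun hh : Hist K C D (n + n') =>
            if hh.visits G.T then G.playProb δ σstar τ (n + n') hh else 0)
          (fun hh _ => by
            split_ifs
            · exact Game.playProb_nonneg G _ _ _ _ hh
            · exact le_refl 0)
          (Finset.mem_univ (h₀.append h'))
        rw [if_pos hvis] at hsl
        exact hsl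
      have hcontra : 0 < G.val δ σstar τ :=
        lt_of_lt_of_le hpos_app (hterm_le.trans (Game.reachProb_le_val G δ σstar τ (n + n')))
      rw [hτ σstar] at hcontra
      exact lt_irrefl 0 hcontra
    · rfl
  show (⨆ n' : ℕ, G.reachProb (uniformD L') σ' (fun l => τ (h.sig2 ++ l)) n') = 0
  rw [show (fun n' : ℕ => G.reachProb (uniformD L') σ' (fun l => τ (h.sig2 ++ l)) n')
    = fun _ => (0 : ℝ) from funext hreach]
  exact ciSup_const
end
end

section
/- Every support L belonging to the greatest fixpoint 𝓛_∞ of the operator Φ is surely winning for player 2. -/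
open scoped Classical

noncomputable section

variable {K I J C D : Type*} [Fintype K] [Fintype I] [Fintype J] [Fintype C] [Fintype D]
  [Nonempty K] [Nonempty I] [Nonempty J] [Nonempty C] [Nonempty D]

lemma mem_phi_of_mem_Linf (G : Game K I J C D) {S : Finset K} (h : S ∈ G.Linf) :
    S ∈ G.Phi G.Linf := by
  have hfix : G.Phi G.Linf = G.Linf :=
    OrderHom.map_gfp (⟨G.Phi, G.Phi_mono⟩ : Set (Finset K) →o Set (Finset K))
  rw [hfix]; exact h

/-- choice of a good action of player 2 for a given belief -/
def gch (G : Game K I J C D) (S : Finset K) : J :=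
  if h : ∃ j : J, ∀ d : D, G.act₂ d = j → G.B2 S d ∈ G.Linf then h.choose
  else Classical.arbitrary J

lemma gch_spec (G : Game K I J C D) {S : Finset K} (hS : S ∈ G.Linf)
    {d : D} (hd : G.act₂ d = gch G S) : G.B2 S d ∈ G.Linf := by
  obtain ⟨-, -, j, hj⟩ := mem_phi_of_mem_Linf G hS
  have hex : ∃ j : J, ∀ d : D, G.act₂ d = j → G.B2 S d ∈ G.Linf := ⟨j, hj⟩
  rw [gch, dif_pos hex] at hd
  exact hex.choose_spec d hd

lemma hist_state_castSucc {n : ℕ} (h : Hist K C D (n + 1)) (m : Fin (n + 1)) :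
    h.state m.castSucc = h.init.state m := by
  unfold Hist.state Hist.init
  by_cases hm : (m : ℕ) = 0
  · simp [hm]
  · rw [dif_neg (by simpa using hm), dif_neg hm]
    show (h.steps _).2.2 = (h.steps _).2.2
    congr 1

lemma hist_state_last : ∀ {n : ℕ} (h : Hist K C D n), h.state (Fin.last n) = h.last
  | 0, h => rfl
  | n + 1, h => by
    rw [Hist.last]
    unfold Hist.state
    rw [dif_neg (by simp [Fin.last])]
    congr 1

lemma hist_sig2_succ {n : ℕ} (h : Hist K C D (n + 1)) :
    h.sig2 = h.init.sig2 ++ [(h.steps (Fin.last n)).2.1] := by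
  rw [Hist.sig2, List.ofFn_succ', List.concat_eq_append]
  rfl

lemma hist_sig2_length {n : ℕ} (h : Hist K C D n) : h.sig2.length = n := by
  simp [Hist.sig2]

lemma b2seq_append (G : Game K I J C D) (L : Finset K) (l : List D) (d : D) :
    G.B2seq L (l ++ [d]) = G.B2 (G.B2seq L l) d := by
  simp [Game.B2seq, List.foldl_append]

/-- Key invariant: under the belief-tracking strategy of player 2, every state
reached with positive probability lies in the current belief, which stays in
`𝓛_∞`. -/
lemma key_invariant (G : Game K I J C D) (L : Finset K) (hL : L ∈ G.Linf)
    (δ : FDist K) (hδ : ∀ k, δ.f k ≠ 0 → k ∈ L) (σ : Strategy1 I C) :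
    ∀ (n : ℕ) (h : Hist K C D n),
      G.playProb δ σ (fun ds => dirac (gch G (G.B2seq L ds))) n h ≠ 0 →
      ∀ m : Fin (n + 1),
        G.B2seq L (h.sig2.take m.val) ∈ G.Linf ∧
          h.state m ∈ G.B2seq L (h.sig2.take m.val) := by
  intro n
  induction n with
  | zero =>
    intro h hp m
    have hm : (m : ℕ) = 0 := by omega
    have hfirst : h.first ∈ L := hδ _ hp
    have hsig : h.sig2 = [] := List.eq_nil_of_length_eq_zero (hist_sig2_length h)
    have hstate : h.state m = h.first := by unfold Hist.state; rw [dif_pos hm]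
    rw [hstate]
    simp only [hsig, List.take_nil, Game.B2seq, List.foldl_nil]
    exact ⟨hL, hfirst⟩
  | succ n ih =>
    intro h hp m
    rw [Game.playProb] at hp
    have h1 : G.playProb δ σ (fun ds => dirac (gch G (G.B2seq L ds))) n h.init ≠ 0 :=
      fun hz => hp (by rw [hz, zero_mul])
    have h2 : (∑ i : I, ∑ j : J,
        ((σ h.init.sig1).f i * ((fun ds => dirac (gch G (G.B2seq L ds))) h.init.sig2).f j *
          G.p h.init.last i j (h.steps (Fin.last n)))) ≠ 0 :=
      fun hz => hp (by rw [hz, mul_zero])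
    have IH := ih h.init h1
    -- extract the positive transition
    obtain ⟨i, -, h2i⟩ := Finset.exists_ne_zero_of_sum_ne_zero h2
    obtain ⟨j, -, h2j⟩ := Finset.exists_ne_zero_of_sum_ne_zero h2i
    have hτ : (dirac (gch G (G.B2seq L h.init.sig2))).f j ≠ 0 :=
      fun hz => h2j (by simp [hz])
    have hpne : G.p h.init.last i j (h.steps (Fin.last n)) ≠ 0 :=
      fun hz => h2j (by simp [hz])
    have hppos : 0 < G.p h.init.last i j (h.steps (Fin.last n)) :=
      lt_of_le_of_ne (G.p_nonneg _ _ _ _) (Ne.symm hpne)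
    set x := h.steps (Fin.last n) with hx
    have hact := G.act_compat h.init.last i j x.1 x.2.1 x.2.2 hppos
    have hj : j = gch G (G.B2seq L h.init.sig2) := by
      by_contra hje
      exact hτ (by simp [dirac, hje])
    -- the belief after `n` steps
    have hlen : h.init.sig2.length = n := hist_sig2_length h.init
    have htake : h.init.sig2.take n = h.init.sig2 :=
      List.take_of_length_le hlen.le
    have IHlast := IH (Fin.last n)
    rw [Fin.val_last, htake, hist_state_last] at IHlast
    obtain ⟨hS₀, hlastmem⟩ := IHlast
    by_cases hm : (m : ℕ) ≤ n
    · -- `m` indexes a state of the initial segment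
      have htake' : h.sig2.take (m : ℕ) = h.init.sig2.take (m : ℕ) := by
        rw [hist_sig2_succ h, List.take_append_of_le_length (by omega)]
      have hmcast : m = (⟨(m : ℕ), by omega⟩ : Fin (n + 1)).castSucc := by
        ext; rfl
      rw [htake', hmcast, hist_state_castSucc, Fin.coe_castSucc]
      exact IH _
    · -- `m` is the last state
      have hm' : (m : ℕ) = n + 1 := by have := m.isLt; omega
      have hmlast : m = Fin.last (n + 1) := by ext; simpa using hm'
      have htake' : h.sig2.take (m : ℕ) = h.init.sig2 ++ [x.2.1] := by
        rw [hm', List.take_of_length_le (hist_sig2_length h).le]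
        exact hist_sig2_succ h
      rw [htake', b2seq_append, hmlast, hist_state_last]
      have hd : G.act₂ x.2.1 = gch G (G.B2seq L h.init.sig2) := by
        rw [← hact.2, hj]
      refine ⟨gch_spec G hS₀ hd, ?_⟩
      have hlast : h.last = x.2.2 := rfl
      rw [hlast]
      rw [Game.B2, Finset.mem_filter]
      refine ⟨Finset.mem_univ _, h.init.last, hlastmem, x.1, ?_⟩
      rw [← hact.1, ← hact.2]
      exact hppos

/-- every support in the greatest fixpoint `𝓛_∞` of `Φ` is surely
winning for player 2. -/
theorem gfp_surely_winning2 (G : Game K I J C D) (L : Finset K) (hL : L.Nonempty)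
    (hmem : L ∈ G.Linf) :
    G.SureWin2 (uniform L hL) := by
  refine ⟨fun ds => dirac (gch G (G.B2seq L ds)), fun σ => ?_⟩
  have hδ : ∀ k, (uniform L hL).f k ≠ 0 → k ∈ L := by
    intro k hk
    by_contra hkL
    exact hk (by simp [uniform, hkL])
  have hreach : ∀ n, G.reachProb (uniform L hL) σ
      (fun ds => dirac (gch G (G.B2seq L ds))) n = 0 := by
    intro n
    rw [Game.reachProb]
    apply Finset.sum_eq_zero
    intro h _
    split_ifs with hv
    · by_contra hp
      obtain ⟨m, hmT⟩ := hv
      obtain ⟨hSL, hstate⟩ := key_invariant G L hmem _ hδ σ n h hp m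
      obtain ⟨-, hdisj, -⟩ := mem_phi_of_mem_Linf G hSL
      have : h.state m ∈ G.B2seq L (h.sig2.take m.val) ∩ G.T :=
        Finset.mem_inter.mpr ⟨hstate, hmT⟩
      rw [hdisj] at this
      exact absurd this (Finset.notMem_empty _)
    · rfl
  rw [Game.val]
  simp only [hreach]
  exact ciSup_const
end
end
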